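/- arXiv:1606.00358 — 2 statements merged into one kernel-verified Lean document; each statement's English description precedes it below -/
import Mathlib

section
/- There exists an absolute constant c > 0 with the following property. Let p be a prime, ζ, ε ∈ (0,1], A, B, C ⊆ F_p sets with |A|, |B|, |C| > ζ·√p, and χ a nontrivial multiplicative character modulo p. If |∑_{a∈A, b∈B, c∈C} χ(a+b+c)| ≥ ε·|A|·|B|·|C|, then the additive energy satisfies E⁺(B, C) ≥ c·(ε·ζ)²·(|B|·|C|)^(3/2). -/
open Finset

namespace Stmt13Aux

variable {p : ℕ} [Fact p.Prime]

lemma conj_apply (χ : MulChar (ZMod p) ℂ) (u : ZMod p) :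
    star (χ u) = χ u⁻¹ := by
  rw [MulChar.star_apply', MulChar.inv_apply']

lemma key (χ : MulChar (ZMod p) ℂ) (hχ : χ ≠ 1) (a a' : ZMod p) :
    ∑ x : ZMod p, χ (a + x) * star (χ (a' + x)) =
      if a = a' then ((p : ℂ) - 1) else -1 := by
  have hterm : ∀ x : ZMod p, χ (a + x) * star (χ (a' + x)) = χ ((a + x) * (a' + x)⁻¹) := by
    intro x
    rw [conj_apply, ← map_mul]
  simp only [hterm]
  by_cases h : a = a'
  · subst h
    rw [if_pos rfl]
    have h1 : ∀ y : ZMod p, χ (y * y⁻¹) = 1 - (if y = 0 then (1 : ℂ) else 0) := by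
      intro y
      by_cases hy : y = 0
      · simp [hy, χ.map_zero]
      · simp [mul_inv_cancel₀ hy, hy]
    calc ∑ x : ZMod p, χ ((a + x) * (a + x)⁻¹)
        = ∑ y : ZMod p, χ (y * y⁻¹) :=
          Fintype.sum_equiv (Equiv.addLeft a) _ _ (fun x => rfl)
      _ = ∑ y : ZMod p, (1 - (if y = 0 then (1 : ℂ) else 0)) := by simp only [h1]
      _ = (p : ℂ) - 1 := by
          rw [Finset.sum_sub_distrib, Finset.sum_const, Finset.sum_ite_eq' univ (0 : ZMod p)]
          simp [ZMod.card]
  · rw [if_neg h]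
    set d : ZMod p := a - a' with hd
    have hd0 : d ≠ 0 := sub_ne_zero.mpr h
    have step1 : ∑ x : ZMod p, χ ((a + x) * (a' + x)⁻¹) = ∑ y : ZMod p, χ ((d + y) * y⁻¹) := by
      refine Fintype.sum_equiv (Equiv.addLeft a') _ _ (fun x => ?_)
      simp only [Equiv.coe_addLeft]
      congr 2
      ring
    rw [step1]
    have step2 : ∑ y : ZMod p, χ ((d + y) * y⁻¹) =
        ∑ y ∈ univ.erase (0 : ZMod p), χ ((d + y) * y⁻¹) := by
      rw [← Finset.add_sum_erase _ _ (mem_univ (0 : ZMod p))]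
      simp [χ.map_zero]
    rw [step2]
    have step3 : ∑ y ∈ univ.erase (0 : ZMod p), χ ((d + y) * y⁻¹) =
        ∑ z ∈ univ.erase (1 : ZMod p), χ z := by
      refine Finset.sum_nbij' (fun y => (d + y) * y⁻¹) (fun z => d * (z - 1)⁻¹)
        ?_ ?_ ?_ ?_ ?_
      · intro y hy
        have hy0 : y ≠ 0 := by simpa using hy
        simp only [mem_erase, mem_univ, and_true]
        intro hcon
        apply hd0
        have h2 : d + y = y := by
          calc d + y = (d + y) * (y⁻¹ * y) := by rw [inv_mul_cancel₀ hy0, mul_one]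
            _ = 1 * y := by rw [← mul_assoc, hcon]
            _ = y := one_mul y
        exact add_right_cancel (by rw [h2, zero_add])
      · intro z hz
        have hz1 : z ≠ 1 := by simpa using hz
        simp only [mem_erase, mem_univ, and_true]
        exact mul_ne_zero hd0 (inv_ne_zero (sub_ne_zero.mpr hz1))
      · intro y hy
        have hy0 : y ≠ 0 := by simpa using hy
        field_simp
        rw [add_sub_cancel_right, div_self hd0]
      · intro z hz
        have hz1 : z ≠ 1 := by simpa using hz
        have : z - 1 ≠ 0 := sub_ne_zero.mpr hz1
        field_simp
        ring
      · intro y _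
        rfl
    rw [step3, Finset.sum_erase_eq_sub (mem_univ (1 : ZMod p)),
      MulChar.sum_eq_zero_of_ne_one hχ, χ.map_one]
    ring

lemma sumT (χ : MulChar (ZMod p) ℂ) (hχ : χ ≠ 1) (A : Finset (ZMod p)) :
    ∑ x : ZMod p, Complex.normSq (∑ a ∈ A, χ (a + x)) =
      (A.card : ℝ) * ((p : ℝ) - A.card) := by
  have hC : (↑(∑ x : ZMod p, Complex.normSq (∑ a ∈ A, χ (a + x))) : ℂ) =
      (A.card : ℂ) * ((p : ℂ) - A.card) := by
    push_cast
    calc (∑ x : ZMod p, (Complex.normSq (∑ a ∈ A, χ (a + x)) : ℂ))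
        = ∑ x : ZMod p, (∑ a ∈ A, χ (a + x)) * star (∑ a' ∈ A, χ (a' + x)) := by
          refine Finset.sum_congr rfl fun x _ => ?_
          rw [← Complex.mul_conj]
          rfl
      _ = ∑ x : ZMod p, ∑ a ∈ A, ∑ a' ∈ A, χ (a + x) * star (χ (a' + x)) := by
          refine Finset.sum_congr rfl fun x _ => ?_
          rw [star_sum, Finset.sum_mul_sum]
      _ = ∑ a ∈ A, ∑ a' ∈ A, ∑ x : ZMod p, χ (a + x) * star (χ (a' + x)) := by
          rw [Finset.sum_comm]
          exact Finset.sum_congr rfl fun a _ => Finset.sum_comm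
      _ = ∑ a ∈ A, ∑ a' ∈ A, (if a = a' then ((p : ℂ) - 1) else -1) := by
          refine Finset.sum_congr rfl fun a _ => Finset.sum_congr rfl fun a' _ => key χ hχ a a'
      _ = (A.card : ℂ) * ((p : ℂ) - A.card) := by
          have hinner : ∀ a ∈ A, ∑ a' ∈ A, (if a = a' then ((p : ℂ) - 1) else -1) =
              (p : ℂ) - A.card := by
            intro a ha
            have hsplit : ∀ a' : ZMod p, (if a = a' then ((p : ℂ) - 1) else -1) =
                (if a' = a then (p : ℂ) else 0) + (-1) := by
              intro a'
              by_cases h : a = a' <;> simp [h, eq_comm] <;> ring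
            rw [Finset.sum_congr rfl fun a' _ => hsplit a', Finset.sum_add_distrib,
              Finset.sum_ite_eq' A a, if_pos ha, Finset.sum_const]
            push_cast
            ring
          rw [Finset.sum_congr rfl hinner, Finset.sum_const]
          push_cast
          ring
  have h2 := hC
  rw [show ((A.card : ℂ) * ((p : ℂ) - A.card)) =
    (((A.card : ℝ) * ((p : ℝ) - A.card) : ℝ) : ℂ) by push_cast; ring] at h2
  exact_mod_cast h2

lemma energy_eq (B C : Finset (ZMod p)) :
    (((B ×ˢ B) ×ˢ (C ×ˢ C)).filter
        (fun x => x.1.1 + x.2.1 = x.1.2 + x.2.2)).card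
      = ∑ x : ZMod p, (((B ×ˢ C).filter (fun q => q.1 + q.2 = x)).card) ^ 2 := by
  classical
  set D := ((B ×ˢ C) ×ˢ (B ×ˢ C)).filter (fun q => q.1.1 + q.1.2 = q.2.1 + q.2.2) with hD
  have h1 : (((B ×ˢ B) ×ˢ (C ×ˢ C)).filter
      (fun x => x.1.1 + x.2.1 = x.1.2 + x.2.2)).card = D.card := by
    refine Finset.card_nbij' (fun q => ((q.1.1, q.2.1), (q.1.2, q.2.2)))
      (fun q => ((q.1.1, q.2.1), (q.1.2, q.2.2))) ?_ ?_ ?_ ?_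
    · intro q hq
      simp only [hD, Finset.mem_coe, Finset.mem_filter, Finset.mem_product] at hq ⊢
      tauto
    · intro q hq
      simp only [hD, Finset.mem_coe, Finset.mem_filter, Finset.mem_product] at hq ⊢
      tauto
    · intro q _; rfl
    · intro q _; rfl
  rw [h1]
  have h2 : D.card = ∑ x : ZMod p, (D.filter (fun q => q.1.1 + q.1.2 = x)).card :=
    Finset.card_eq_sum_card_fiberwise (fun q _ => Finset.mem_univ _)
  rw [h2]
  refine Finset.sum_congr rfl fun x _ => ?_
  have h3 : D.filter (fun q => q.1.1 + q.1.2 = x) =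
      ((B ×ˢ C).filter (fun q => q.1 + q.2 = x)) ×ˢ
        ((B ×ˢ C).filter (fun q => q.1 + q.2 = x)) := by
    ext q
    simp only [hD, Finset.mem_filter, Finset.mem_product]
    constructor
    · rintro ⟨⟨⟨h4, h5⟩, h6⟩, h7⟩
      exact ⟨⟨h4, h7⟩, h5, h6 ▸ h7⟩
    · rintro ⟨⟨h4, h5⟩, h6, h7⟩
      exact ⟨⟨⟨h4, h6⟩, h5.trans h7.symm⟩, h5⟩
  rw [h3, Finset.card_product, sq]

end Stmt13Aux

set_option maxHeartbeats 1000000 in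
/-- A large ternary character sum forces large additive energy `E⁺(B, C)`. -/
theorem stmt_13 :
    ∃ c : ℝ, 0 < c ∧
      ∀ (p : ℕ), p.Prime →
        ∀ (ζ ε : ℝ), ζ ∈ Set.Ioc (0 : ℝ) 1 → ε ∈ Set.Ioc (0 : ℝ) 1 →
          ∀ A B C : Finset (ZMod p),
            (A.card : ℝ) > ζ * Real.sqrt p →
            (B.card : ℝ) > ζ * Real.sqrt p →
            (C.card : ℝ) > ζ * Real.sqrt p →
            ∀ χ : MulChar (ZMod p) ℂ, χ ≠ 1 →
              ‖∑ a ∈ A, ∑ b ∈ B, ∑ c' ∈ C, χ (a + b + c')‖ ≥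
                ε * A.card * B.card * C.card →
              ((((B ×ˢ B) ×ˢ (C ×ˢ C)).filter
                  (fun x => x.1.1 + x.2.1 = x.1.2 + x.2.2)).card : ℝ) ≥
                c * (ε * ζ) ^ 2 * ((B.card : ℝ) * C.card) ^ ((3 : ℝ) / 2) := by
  refine ⟨1, one_pos, ?_⟩
  intro p hp ζ ε hζ hε A B C hA hB hC χ hχ hS
  haveI : Fact p.Prime := ⟨hp⟩
  obtain ⟨hζ0, hζ1⟩ := hζ
  obtain ⟨hε0, hε1⟩ := hε
  have hppos : (0 : ℝ) < p := by exact_mod_cast hp.pos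
  have hsp : (0 : ℝ) < Real.sqrt p := Real.sqrt_pos.mpr hppos
  set sp : ℝ := Real.sqrt p with hsp_def
  have ha0 : (0 : ℝ) < A.card := lt_trans (by positivity) hA
  have hb0 : (0 : ℝ) < B.card := lt_trans (by positivity) hB
  have hc0 : (0 : ℝ) < C.card := lt_trans (by positivity) hC
  set a0 : ℝ := (A.card : ℝ)
  set b0 : ℝ := (B.card : ℝ)
  set c0 : ℝ := (C.card : ℝ)
  classical
  set r : ZMod p → ℕ := fun x => ((B ×ˢ C).filter (fun q => q.1 + q.2 = x)).card with hr
  set T : ZMod p → ℂ := fun x => ∑ a ∈ A, χ (a + x) with hT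
  -- energy identity
  set E : ℝ := ((((B ×ˢ B) ×ˢ (C ×ˢ C)).filter
      (fun x => x.1.1 + x.2.1 = x.1.2 + x.2.2)).card : ℝ) with hE
  have hEr : E = ∑ x : ZMod p, ((r x : ℝ)) ^ 2 := by
    rw [hE, Stmt13Aux.energy_eq B C]
    push_cast
    rfl
  -- regrouping of the character sum
  have hgroup : (∑ a ∈ A, ∑ b ∈ B, ∑ c' ∈ C, χ (a + b + c')) =
      ∑ x : ZMod p, (r x : ℂ) * T x := by
    calc ∑ a ∈ A, ∑ b ∈ B, ∑ c' ∈ C, χ (a + b + c')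
        = ∑ a ∈ A, ∑ q ∈ B ×ˢ C, χ (a + q.1 + q.2) := by
          exact Finset.sum_congr rfl fun a _ => (Finset.sum_product' B C fun b c => χ (a + b + c)).symm
      _ = ∑ q ∈ B ×ˢ C, ∑ a ∈ A, χ (a + (q.1 + q.2)) := by
          rw [Finset.sum_comm]
          exact Finset.sum_congr rfl fun q _ => Finset.sum_congr rfl fun a _ => by
            rw [add_assoc]
      _ = ∑ q ∈ B ×ˢ C, T (q.1 + q.2) := rfl
      _ = ∑ x : ZMod p, ∑ q ∈ (B ×ˢ C).filter (fun q => q.1 + q.2 = x), T x :=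
          (Finset.sum_fiberwise_of_maps_to' (fun q _ => Finset.mem_univ _) T).symm
      _ = ∑ x : ZMod p, (r x : ℂ) * T x := by
          refine Finset.sum_congr rfl fun x _ => ?_
          rw [Finset.sum_const, nsmul_eq_mul]
  -- triangle inequality
  have habs : ‖∑ a ∈ A, ∑ b ∈ B, ∑ c' ∈ C, χ (a + b + c')‖ ≤
      ∑ x : ZMod p, (r x : ℝ) * ‖T x‖ := by
    rw [hgroup]
    refine le_trans (norm_sum_le _ _) (le_of_eq ?_)
    refine Finset.sum_congr rfl fun x _ => ?_
    rw [norm_mul, Complex.norm_natCast]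
  -- Cauchy–Schwarz
  have hCS : (∑ x : ZMod p, (r x : ℝ) * ‖T x‖) ^ 2 ≤
      (∑ x : ZMod p, ((r x : ℝ)) ^ 2) * (∑ x : ZMod p, ‖T x‖ ^ 2) :=
    Finset.sum_mul_sq_le_sq_mul_sq _ _ _
  -- second moment bound
  have hT2 : ∑ x : ZMod p, ‖T x‖ ^ 2 = a0 * ((p : ℝ) - a0) := by
    simp only [Complex.sq_norm]
    exact Stmt13Aux.sumT χ hχ A
  have hEnn : (0 : ℝ) ≤ E := by rw [hE]; positivity
  have hE1 : (ε * a0 * b0 * c0) ^ 2 ≤ E * (a0 * p) := by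
    have h1 : (ε * a0 * b0 * c0) ^ 2 ≤
        (‖∑ a ∈ A, ∑ b ∈ B, ∑ c' ∈ C, χ (a + b + c')‖) ^ 2 := by
      refine pow_le_pow_left₀ (by positivity) hS 2
    refine le_trans h1 ?_
    have h2 : (‖∑ a ∈ A, ∑ b ∈ B, ∑ c' ∈ C, χ (a + b + c')‖) ^ 2 ≤
        (∑ x : ZMod p, (r x : ℝ) * ‖T x‖) ^ 2 :=
      pow_le_pow_left₀ (norm_nonneg _) habs 2
    refine le_trans h2 (le_trans hCS ?_)
    rw [← hEr, hT2]
    have : a0 * ((p : ℝ) - a0) ≤ a0 * p := by nlinarith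
    nlinarith
  -- arithmetic endgame
  set x : ℝ := b0 * c0 with hx_def
  have hxpos : (0 : ℝ) < x := mul_pos hb0 hc0
  set sx : ℝ := Real.sqrt x with hsx_def
  have hsxpos : (0 : ℝ) < sx := Real.sqrt_pos.mpr hxpos
  have hsp2 : sp * sp = (p : ℝ) := Real.mul_self_sqrt (le_of_lt hppos)
  have hsx2 : sx * sx = x := Real.mul_self_sqrt (le_of_lt hxpos)
  have hζsp : (0 : ℝ) < ζ * sp := mul_pos hζ0 hsp
  have hsx_gt : ζ * sp < sx := by
    have hlt : (ζ * sp) ^ 2 < x :=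
      by nlinarith [mul_lt_mul'' hB hC (le_of_lt hζsp) (le_of_lt hζsp)]
    have := Real.sqrt_lt_sqrt (sq_nonneg (ζ * sp)) hlt
    rwa [Real.sqrt_sq (le_of_lt hζsp)] at this
  have h1 : ε ^ 2 * a0 * x ^ 2 ≤ E * p := by
    rw [← mul_le_mul_iff_of_pos_right ha0]
    calc ε ^ 2 * a0 * x ^ 2 * a0 = (ε * a0 * b0 * c0) ^ 2 := by rw [hx_def]; ring
      _ ≤ E * (a0 * p) := hE1
      _ = E * p * a0 := by ring
  have hrpow : x ^ ((3 : ℝ) / 2) = x * sx := by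
    rw [show (3 : ℝ) / 2 = 1 + 1 / 2 by norm_num, Real.rpow_add hxpos, Real.rpow_one,
      ← Real.sqrt_eq_rpow]
  have hfinal : (ε * ζ) ^ 2 * (x * sx) ≤ E := by
    rw [← mul_le_mul_iff_of_pos_right hppos]
    calc (ε * ζ) ^ 2 * (x * sx) * p
        = ε ^ 2 * ((ζ * sp) * ((ζ * sp) * sx) * x) := by rw [← hsp2]; ring
      _ ≤ ε ^ 2 * (a0 * (sx * sx) * x) := by
          have hle1 : (ζ * sp) * sx ≤ sx * sx :=
            mul_le_mul_of_nonneg_right (le_of_lt hsx_gt) (le_of_lt hsxpos)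
          have hle2 : (ζ * sp) * ((ζ * sp) * sx) ≤ a0 * (sx * sx) := by
            refine mul_le_mul (le_of_lt hA) hle1 (by positivity) (le_of_lt ha0)
          exact mul_le_mul_of_nonneg_left (mul_le_mul_of_nonneg_right hle2 hxpos.le) (sq_nonneg ε)
      _ = ε ^ 2 * a0 * x ^ 2 := by rw [hsx2]; ring
      _ ≤ E * p := h1
  calc E ≥ (ε * ζ) ^ 2 * (x * sx) := hfinal
    _ = 1 * (ε * ζ) ^ 2 * (b0 * c0) ^ ((3 : ℝ) / 2) := by rw [hrpow, hx_def]; ring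
end

section
/- There exists an absolute constant c > 0 with the following property. Let p be a prime, ζ, ε ∈ (0,1], A, B, C ⊆ F_p sets with |A|, |B|, |C| > ζ·√p, and χ a nontrivial multiplicative character modulo p. If |∑_{a∈A, b∈B, c∈C} χ(a+b+c)| ≥ ε·|A|·|B|·|C|, then the additive energy satisfies E⁺(A) ≥ c·(ε·ζ)⁴·|A|³. -/
set_option maxHeartbeats 2000000

open Finset


lemma char_orth_aux {p : ℕ} [Fact p.Prime] {χ : MulChar (ZMod p) ℂ} (hχ : χ ≠ 1) (d : ZMod p) :
    ∑ u : ZMod p, χ u * (starRingEnd ℂ) (χ (u + d)) =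
      if d = 0 then ((p : ℂ) - 1) else -1 := by
  have hstar : ∀ z : ZMod p, (starRingEnd ℂ) (χ z) = χ z⁻¹ := by
    intro z
    have := MulChar.star_apply' χ z
    rw [RCLike.star_def] at this
    rw [this, MulChar.inv_apply' χ z]
  have hzero : χ 0 = 0 := MulChar.map_nonunit χ (by simp : ¬ IsUnit (0 : ZMod p))
  rcases eq_or_ne d 0 with hd0 | hdn
  · rw [if_pos hd0, hd0]
    have hterm : ∀ u : ZMod p, χ u * (starRingEnd ℂ) (χ (u + 0)) =
        if u = 0 then 0 else 1 := by
      intro u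
      rcases eq_or_ne u 0 with hu | hu
      · simp [hu, hzero]
      · rw [add_zero, hstar, ← map_mul, mul_inv_cancel₀ hu, map_one, if_neg hu]
    rw [Fintype.sum_congr _ _ hterm]
    have hp1 : 1 ≤ p := (Fact.out : p.Prime).one_lt.le
    simp [Finset.sum_ite, Finset.filter_ne', ZMod.card, Nat.cast_sub hp1]
  · rw [if_neg hdn]
    have hsplit : ∑ u : ZMod p, χ u * (starRingEnd ℂ) (χ (u + d)) =
        ∑ u ∈ Finset.univ.erase (-d), χ u * (starRingEnd ℂ) (χ (u + d)) := by
      rw [← Finset.sum_erase_add _ _ (Finset.mem_univ (-d))]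
      simp [hzero]
    rw [hsplit]
    have hbij : ∑ u ∈ Finset.univ.erase (-d), χ u * (starRingEnd ℂ) (χ (u + d)) =
        ∑ v ∈ Finset.univ.erase (1 : ZMod p), χ v := by
      apply Finset.sum_nbij' (fun u => u * (u + d)⁻¹) (fun v => d * v * (1 - v)⁻¹)
      · intro u hu
        have hu' : u + d ≠ 0 := fun hc =>
          Finset.ne_of_mem_erase hu (eq_neg_of_add_eq_zero_left hc)
        simp only [Finset.mem_erase, Finset.mem_univ, and_true]
        intro hc
        rw [← div_eq_mul_inv] at hc
        have := (div_eq_one_iff_eq hu').mp hc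
        exact hdn (left_eq_add.mp this)
      · intro v hv
        have hv' : (1 : ZMod p) - v ≠ 0 :=
          sub_ne_zero.mpr (Ne.symm (Finset.ne_of_mem_erase hv))
        simp only [Finset.mem_erase, Finset.mem_univ, and_true]
        intro hc
        have h2 : d * v = (-d) * (1 - v) := by
          calc d * v = d * v * (1 - v)⁻¹ * (1 - v) := by
                rw [mul_assoc, inv_mul_cancel₀ hv', mul_one]
          _ = (-d) * (1 - v) := by rw [hc]
        have h3 : d * 1 = 0 := by linear_combination h2
        rw [mul_one] at h3
        exact hdn h3
      · intro u hu
        have hu' : u + d ≠ 0 := fun hc =>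
          Finset.ne_of_mem_erase hu (eq_neg_of_add_eq_zero_left hc)
        have h1 : 1 - u * (u + d)⁻¹ = d * (u + d)⁻¹ := by
          field_simp
          ring
        rw [h1]
        field_simp
      · intro v hv
        have hv' : (1 : ZMod p) - v ≠ 0 :=
          sub_ne_zero.mpr (Ne.symm (Finset.ne_of_mem_erase hv))
        have h1 : d * v * (1 - v)⁻¹ + d = d * (1 - v)⁻¹ := by
          field_simp
          ring
        rw [h1]
        field_simp
      · intro u hu
        rw [hstar, ← map_mul]
    rw [hbij]
    have hsum := MulChar.sum_eq_zero_of_ne_one hχ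
    rw [← Finset.sum_erase_add _ _ (Finset.mem_univ (1 : ZMod p)), map_one] at hsum
    linear_combination hsum

lemma char_orth {p : ℕ} [Fact p.Prime] {χ : MulChar (ZMod p) ℂ} (hχ : χ ≠ 1) (x y : ZMod p) :
    ∑ c : ZMod p, χ (x + c) * (starRingEnd ℂ) (χ (y + c)) =
      if x = y then ((p : ℂ) - 1) else -1 := by
  have hre : ∑ c : ZMod p, χ (x + c) * (starRingEnd ℂ) (χ (y + c)) =
      ∑ u : ZMod p, χ u * (starRingEnd ℂ) (χ (u + (y - x))) := by
    apply Fintype.sum_equiv (Equiv.addLeft x)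
    intro c
    simp only [Equiv.coe_addLeft]
    congr 2
    ring
  rw [hre, char_orth_aux hχ]
  congr 1
  simp [sub_eq_zero, eq_comm]


lemma fiber_count {M N : Type*} [Fintype M] [DecidableEq M] (S : Finset N) (T : Finset N)
    (f g : N → M) :
    ((S ×ˢ T).filter fun x => f x.1 = g x.2).card
      = ∑ d : M, (S.filter fun y => f y = d).card * (T.filter fun z => g z = d).card := by
  classical
  rw [Finset.card_filter, Finset.sum_product]
  have h1 : ∀ y ∈ S, (∑ z ∈ T, if f y = g z then (1 : ℕ) else 0)
      = (T.filter fun z => g z = f y).card := by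
    intro y _
    rw [Finset.card_filter]
    exact Finset.sum_congr rfl fun z _ => by simp [eq_comm]
  rw [Finset.sum_congr rfl h1]
  rw [← Finset.sum_fiberwise' S f (fun d => (T.filter fun z => g z = d).card)]
  exact Finset.sum_congr rfl fun d _ => by rw [Finset.sum_const, smul_eq_mul]

lemma quad_reindex {M : Type*} [DecidableEq M] [AddCommGroup M] (A B : Finset M) :
    (((A ×ˢ B) ×ˢ (A ×ˢ B)).filter fun x => x.1.1 + x.1.2 = x.2.1 + x.2.2).card
      = (((A ×ˢ A) ×ˢ (B ×ˢ B)).filter fun x => x.1.1 - x.1.2 = x.2.1 - x.2.2).card := by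
  apply Finset.card_nbij' (fun x => ((x.1.1, x.2.1), (x.2.2, x.1.2)))
    (fun y => ((y.1.1, y.2.2), (y.1.2, y.2.1)))
  · rintro ⟨⟨a, b⟩, ⟨a', b'⟩⟩ hx
    simp only [Finset.mem_coe, Finset.mem_filter, Finset.mem_product] at hx ⊢
    refine ⟨⟨⟨hx.1.1.1, hx.1.2.1⟩, ⟨hx.1.2.2, hx.1.1.2⟩⟩, ?_⟩
    have h2 := hx.2
    rw [sub_eq_sub_iff_add_eq_add, h2]
    exact add_comm _ _
  · rintro ⟨⟨a, a'⟩, ⟨b', b⟩⟩ hy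
    simp only [Finset.mem_coe, Finset.mem_filter, Finset.mem_product] at hy ⊢
    refine ⟨⟨⟨hy.1.1.1, hy.1.2.2⟩, ⟨hy.1.1.2, hy.1.2.1⟩⟩, ?_⟩
    have h2 := hy.2
    rw [sub_eq_sub_iff_add_eq_add] at h2
    exact h2.trans (add_comm _ _)
  · rintro ⟨⟨a, b⟩, ⟨a', b'⟩⟩ _; rfl
  · rintro ⟨⟨a, a'⟩, ⟨b', b⟩⟩ _; rfl



lemma sum_sq_eq {p : ℕ} [Fact p.Prime] {χ : MulChar (ZMod p) ℂ} (hχ : χ ≠ 1)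
    (A B : Finset (ZMod p)) :
    ∑ c : ZMod p, (∑ y ∈ A ×ˢ B, χ (y.1 + y.2 + c)) *
        (starRingEnd ℂ) (∑ y ∈ A ×ˢ B, χ (y.1 + y.2 + c)) =
      (p : ℂ) * ((((A ×ˢ B) ×ˢ (A ×ˢ B)).filter
          fun x => x.1.1 + x.1.2 = x.2.1 + x.2.2).card : ℂ)
        - ((A.card : ℂ) * (B.card : ℂ)) ^ 2 := by
  have expand : ∀ c : ZMod p,
      (∑ y ∈ A ×ˢ B, χ (y.1 + y.2 + c)) *
        (starRingEnd ℂ) (∑ y ∈ A ×ˢ B, χ (y.1 + y.2 + c)) =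
      ∑ x ∈ (A ×ˢ B) ×ˢ (A ×ˢ B),
        χ (x.1.1 + x.1.2 + c) * (starRingEnd ℂ) (χ (x.2.1 + x.2.2 + c)) := by
    intro c
    rw [map_sum, Finset.sum_mul_sum, ← Finset.sum_product']
  rw [Fintype.sum_congr _ _ expand, Finset.sum_comm]
  have inner : ∀ x ∈ (A ×ˢ B) ×ˢ (A ×ˢ B),
      (∑ c : ZMod p, χ (x.1.1 + x.1.2 + c) * (starRingEnd ℂ) (χ (x.2.1 + x.2.2 + c)))
      = if x.1.1 + x.1.2 = x.2.1 + x.2.2 then ((p : ℂ) - 1) else -1 := by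
    intro x _
    exact char_orth hχ (x.1.1 + x.1.2) (x.2.1 + x.2.2)
  rw [Finset.sum_congr rfl inner]
  have split : ∀ x : (ZMod p × ZMod p) × (ZMod p × ZMod p),
      (if x.1.1 + x.1.2 = x.2.1 + x.2.2 then ((p : ℂ) - 1) else -1)
      = (if x.1.1 + x.1.2 = x.2.1 + x.2.2 then (p : ℂ) else 0) - 1 := by
    intro x; split_ifs <;> ring
  rw [Finset.sum_congr rfl fun x _ => split x, Finset.sum_sub_distrib,
    Finset.sum_const, ← Finset.sum_filter, Finset.sum_const]
  simp only [Finset.card_product, nsmul_eq_mul, mul_one]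
  push_cast
  ring


/-- A large ternary character sum forces large additive energy `E⁺(A)`. -/
theorem stmt_14 :
    ∃ c : ℝ, 0 < c ∧
      ∀ (p : ℕ), p.Prime →
        ∀ (ζ ε : ℝ), ζ ∈ Set.Ioc (0 : ℝ) 1 → ε ∈ Set.Ioc (0 : ℝ) 1 →
          ∀ A B C : Finset (ZMod p),
            (A.card : ℝ) > ζ * Real.sqrt p →
            (B.card : ℝ) > ζ * Real.sqrt p →
            (C.card : ℝ) > ζ * Real.sqrt p →
            ∀ χ : MulChar (ZMod p) ℂ, χ ≠ 1 →
              ‖∑ a ∈ A, ∑ b ∈ B, ∑ c' ∈ C, χ (a + b + c')‖ ≥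
                ε * A.card * B.card * C.card →
              ((((A ×ˢ A) ×ˢ (A ×ˢ A)).filter
                  (fun x => x.1.1 + x.1.2 = x.2.1 + x.2.2)).card : ℝ) ≥
                c * (ε * ζ) ^ 4 * (A.card : ℝ) ^ 3 := by
  refine ⟨1, one_pos, ?_⟩
  intro p hp ζ ε hζ hε A B C hA hB hC χ hχ hS
  haveI : Fact p.Prime := ⟨hp⟩
  obtain ⟨hζ0, hζ1⟩ := hζ
  obtain ⟨hε0, hε1⟩ := hε
  set KA : ℝ := (A.card : ℝ) with hKA
  set KB : ℝ := (B.card : ℝ) with hKB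
  set KC : ℝ := (C.card : ℝ) with hKC
  have hp0 : (0 : ℝ) < p := by exact_mod_cast hp.pos
  have hsq : Real.sqrt p > 0 := Real.sqrt_pos.mpr hp0
  have hsqsq : Real.sqrt p ^ 2 = p := Real.sq_sqrt hp0.le
  have hζs : 0 < ζ * Real.sqrt p := mul_pos hζ0 hsq
  have hKA0 : 0 < KA := lt_trans hζs hA
  have hKB0 : 0 < KB := lt_trans hζs hB
  have hKC0 : 0 < KC := lt_trans hζs hC
  clear_value KA KB KC
  -- the main players
  set g : ZMod p → ℂ := fun c => ∑ y ∈ A ×ˢ B, χ (y.1 + y.2 + c) with hg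
  set Q : ℕ := (((A ×ˢ B) ×ˢ (A ×ˢ B)).filter
      fun x => x.1.1 + x.1.2 = x.2.1 + x.2.2).card with hQdef
  set E : ℕ := (((A ×ˢ A) ×ˢ (A ×ˢ A)).filter
      fun x => x.1.1 + x.1.2 = x.2.1 + x.2.2).card with hEdef
  -- rewrite the triple sum
  have hswap : ∑ a ∈ A, ∑ b ∈ B, ∑ c' ∈ C, χ (a + b + c') = ∑ c' ∈ C, g c' := by
    calc ∑ a ∈ A, ∑ b ∈ B, ∑ c' ∈ C, χ (a + b + c')
        = ∑ a ∈ A, ∑ c' ∈ C, ∑ b ∈ B, χ (a + b + c') :=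
          Finset.sum_congr rfl fun a _ => Finset.sum_comm
      _ = ∑ c' ∈ C, ∑ a ∈ A, ∑ b ∈ B, χ (a + b + c') := Finset.sum_comm
      _ = ∑ c' ∈ C, g c' := by
          refine Finset.sum_congr rfl fun c _ => ?_
          exact (Finset.sum_product A B (fun y : ZMod p × ZMod p => χ (y.1 + y.2 + c))).symm
  -- step 1 : ε KA KB KC ≤ ∑_{c ∈ C} |g c|
  have hU : ε * KA * KB * KC ≤ ∑ c ∈ C, ‖g c‖ := by
    calc ε * KA * KB * KC ≤ ‖∑ c' ∈ C, g c'‖ := by rw [← hswap]; exact hS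
    _ ≤ ∑ c ∈ C, ‖g c‖ := norm_sum_le _ _
  -- step 2 : Cauchy-Schwarz in c
  have hCS : (∑ c ∈ C, ‖g c‖) ^ 2 ≤ KC * ∑ c ∈ C, ‖g c‖ ^ 2 := by
    have := Finset.sum_mul_sq_le_sq_mul_sq C (fun _ => (1 : ℝ)) (fun c => ‖g c‖)
    simpa [hKC] using this
  -- step 3 : total square sum
  set T : ℝ := ∑ c : ZMod p, Complex.normSq (g c) with hTdef
  have hTC : ((T : ℂ)) = (p : ℂ) * (Q : ℂ) - ((A.card : ℂ) * (B.card : ℂ)) ^ 2 := by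
    rw [hTdef]
    push_cast
    rw [show ∑ c : ZMod p, (Complex.normSq (g c) : ℂ) = ∑ c : ZMod p, g c * (starRingEnd ℂ) (g c)
      from Finset.sum_congr rfl fun c _ => (Complex.mul_conj (g c)).symm]
    exact sum_sq_eq hχ A B
  have hT : T = p * Q - (KA * KB) ^ 2 := by
    have : ((T : ℂ)) = (((p * Q - (KA * KB) ^ 2 : ℝ)) : ℂ) := by
      rw [hTC, hKA, hKB]; push_cast; ring
    exact_mod_cast this
  have hsumC : ∑ c ∈ C, ‖g c‖ ^ 2 ≤ T := by
    rw [hTdef]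
    have : ∀ c, ‖g c‖ ^ 2 = Complex.normSq (g c) := fun c => Complex.sq_norm (g c)
    rw [Finset.sum_congr rfl fun c _ => this c]
    exact Finset.sum_le_sum_of_subset_of_nonneg (Finset.subset_univ C)
      (fun c _ _ => Complex.normSq_nonneg _)
  -- step 4 : Q and E via fibers
  set rA : ZMod p → ℕ := fun d => ((A ×ˢ A).filter fun y => y.1 - y.2 = d).card with hrA
  set rB : ZMod p → ℕ := fun d => ((B ×ˢ B).filter fun y => y.1 - y.2 = d).card with hrB
  have hQd : Q = ∑ d : ZMod p, rA d * rB d := by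
    rw [hQdef, quad_reindex A B]
    exact fiber_count (A ×ˢ A) (B ×ˢ B) (fun y => y.1 - y.2) (fun y => y.1 - y.2)
  have hEd : E = ∑ d : ZMod p, rA d * rA d := by
    rw [hEdef, quad_reindex A A]
    exact fiber_count (A ×ˢ A) (A ×ˢ A) (fun y => y.1 - y.2) (fun y => y.1 - y.2)
  have hQCS : (Q : ℝ) ^ 2 ≤ (E : ℝ) * ∑ d : ZMod p, (rB d : ℝ) ^ 2 := by
    have := Finset.sum_mul_sq_le_sq_mul_sq Finset.univ (fun d => (rA d : ℝ)) (fun d => (rB d : ℝ))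
    have hQr : (Q : ℝ) = ∑ d : ZMod p, (rA d : ℝ) * (rB d : ℝ) := by
      rw [hQd]; push_cast; rfl
    have hEr : (E : ℝ) = ∑ d : ZMod p, (rA d : ℝ) ^ 2 := by
      rw [hEd]; push_cast; simp [sq]
    rw [hQr, hEr]
    exact this
  -- step 5 : ∑ rB² ≤ KB³
  have hrBle : ∀ d, rB d ≤ B.card := by
    intro d
    apply Finset.card_le_card_of_injOn (fun y => y.1)
    · intro y hy
      exact (Finset.mem_product.mp (Finset.mem_filter.mp hy).1).1
    · intro y hy z hz hyz
      have hy2 := (Finset.mem_filter.mp hy).2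
      have hz2 := (Finset.mem_filter.mp hz).2
      simp only at hy2 hz2 hyz
      have h3 : z.1 - y.2 = z.1 - z.2 := by rw [← hyz, hy2, ← hz2, hyz]
      exact Prod.ext hyz (sub_right_injective h3)
  have hrBsum : ∑ d : ZMod p, rB d = B.card * B.card := by
    rw [← Finset.card_product]
    exact (Finset.card_eq_sum_card_fiberwise
      (f := fun y : ZMod p × ZMod p => y.1 - y.2) (t := Finset.univ)
      (fun x _ => Finset.mem_univ _)).symm
  have hEB : ∑ d : ZMod p, (rB d : ℝ) ^ 2 ≤ KB ^ 3 := by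
    have h1 : ∀ d : ZMod p, (rB d : ℝ) ^ 2 ≤ KB * rB d := by
      intro d
      have := hrBle d
      have h0 : (0 : ℝ) ≤ (rB d : ℝ) := Nat.cast_nonneg _
      have hle : (rB d : ℝ) ≤ KB := by rw [hKB]; exact_mod_cast this
      nlinarith
    calc ∑ d : ZMod p, (rB d : ℝ) ^ 2 ≤ ∑ d : ZMod p, KB * rB d :=
          Finset.sum_le_sum fun d _ => h1 d
      _ = KB * ∑ d : ZMod p, (rB d : ℝ) := by rw [Finset.mul_sum]
      _ = KB ^ 3 := by
          have : ∑ d : ZMod p, (rB d : ℝ) = KB * KB := by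
            rw [← Nat.cast_sum, hrBsum, hKB]
            push_cast; ring
          rw [this]; ring
  -- assemble
  have hE0 : (0 : ℝ) ≤ (E : ℝ) := Nat.cast_nonneg _
  have hQ0 : (0 : ℝ) ≤ (Q : ℝ) := Nat.cast_nonneg _
  have hU0 : (0 : ℝ) ≤ ε * KA * KB * KC :=
    (mul_pos (mul_pos (mul_pos hε0 hKA0) hKB0) hKC0).le
  have hTQ : T ≤ p * Q := by rw [hT]; nlinarith [sq_nonneg (KA * KB)]
  have step1 : (ε * KA * KB * KC) ^ 2 ≤ KC * (p * Q) := by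
    calc (ε * KA * KB * KC) ^ 2 ≤ (∑ c ∈ C, ‖g c‖) ^ 2 := by
          apply pow_le_pow_left₀ hU0 hU
      _ ≤ KC * ∑ c ∈ C, ‖g c‖ ^ 2 := hCS
      _ ≤ KC * T := by
          apply mul_le_mul_of_nonneg_left hsumC hKC0.le
      _ ≤ KC * (p * Q) := mul_le_mul_of_nonneg_left hTQ hKC0.le
  have step2 : ((ε * KA * KB * KC) ^ 2) ^ 2 ≤ (KC * (p * Q)) ^ 2 :=
    pow_le_pow_left₀ (sq_nonneg _) step1 2
  have step3 : (KC * (p * Q)) ^ 2 ≤ KC ^ 2 * p ^ 2 * ((E : ℝ) * KB ^ 3) := by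
    have h2 : (Q:ℝ)^2 ≤ (E:ℝ) * KB ^ 3 := by
      calc ((Q:ℝ))^2 ≤ (E : ℝ) * ∑ d : ZMod p, (rB d : ℝ) ^ 2 := hQCS
        _ ≤ (E : ℝ) * KB ^ 3 := mul_le_mul_of_nonneg_left hEB hE0
    calc (KC * (p * Q)) ^ 2 = KC ^ 2 * p ^ 2 * (Q:ℝ)^2 := by ring
      _ ≤ KC ^ 2 * p ^ 2 * ((E : ℝ) * KB ^ 3) := by
          exact mul_le_mul_of_nonneg_left h2
            (mul_pos (pow_pos hKC0 2) (pow_pos hp0 2)).le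
  have H1 : ε ^ 4 * KA ^ 4 * KB ^ 4 * KC ^ 4 ≤ KC ^ 2 * p ^ 2 * ((E : ℝ) * KB ^ 3) := by
    calc ε ^ 4 * KA ^ 4 * KB ^ 4 * KC ^ 4 = ((ε * KA * KB * KC) ^ 2) ^ 2 := by ring
      _ ≤ (KC * (p * Q)) ^ 2 := step2
      _ ≤ KC ^ 2 * p ^ 2 * ((E : ℝ) * KB ^ 3) := step3
  have key : ζ ^ 4 * p ^ 2 ≤ KA * KB * KC ^ 2 := by
    have hKC2 : (ζ * Real.sqrt p) ^ 2 ≤ KC ^ 2 := pow_le_pow_left₀ hζs.le hC.le 2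
    have M1 : (ζ * Real.sqrt p) * (ζ * Real.sqrt p) ≤ KA * KB :=
      mul_le_mul hA.le hB.le hζs.le hKA0.le
    have M3 : ((ζ * Real.sqrt p) * (ζ * Real.sqrt p)) * (ζ * Real.sqrt p) ^ 2
        ≤ (KA * KB) * KC ^ 2 :=
      mul_le_mul M1 hKC2 (sq_nonneg _) (mul_pos hKA0 hKB0).le
    have h4 : (Real.sqrt p) ^ 4 = (p : ℝ) ^ 2 := by
      rw [show (Real.sqrt p) ^ 4 = ((Real.sqrt p) ^ 2) ^ 2 by ring, hsqsq]
    calc ζ ^ 4 * (p : ℝ) ^ 2 = ((ζ * Real.sqrt p) * (ζ * Real.sqrt p)) * (ζ * Real.sqrt p) ^ 2 := by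
          rw [← h4]; ring
      _ ≤ (KA * KB) * KC ^ 2 := M3
      _ = KA * KB * KC ^ 2 := by ring
  have hposf : (0 : ℝ) < KC ^ 2 * p ^ 2 * KB ^ 3 :=
    mul_pos (mul_pos (pow_pos hKC0 2) (pow_pos hp0 2)) (pow_pos hKB0 3)
  rw [ge_iff_le, one_mul]
  rw [← mul_le_mul_iff_of_pos_right hposf]
  calc (ε * ζ) ^ 4 * KA ^ 3 * (KC ^ 2 * p ^ 2 * KB ^ 3)
      = ε ^ 4 * KA ^ 3 * KB ^ 3 * KC ^ 2 * (ζ ^ 4 * p ^ 2) := by ring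
    _ ≤ ε ^ 4 * KA ^ 3 * KB ^ 3 * KC ^ 2 * (KA * KB * KC ^ 2) := by
        exact mul_le_mul_of_nonneg_left key
          (mul_pos (mul_pos (mul_pos (pow_pos hε0 4) (pow_pos hKA0 3)) (pow_pos hKB0 3))
            (pow_pos hKC0 2)).le
    _ = ε ^ 4 * KA ^ 4 * KB ^ 4 * KC ^ 4 := by ring
    _ ≤ KC ^ 2 * p ^ 2 * ((E : ℝ) * KB ^ 3) := H1
    _ = (E : ℝ) * (KC ^ 2 * p ^ 2 * KB ^ 3) := by ring
end
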